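/- Let W_1, …, W_L be nonzero real matrices such that the harmonic mean of the ratios ‖W_i‖_F / ‖W_i‖_σ is at most B^{k/L} for some B > 0 and integers 1 ≤ k < L. Then there exists an index l and ε₀ > 0 such that for all 0 < ε < ε₀, rank_ε(W_l) ≤ ‖W_l‖_σ² · B^{2k/L} / ε². -/

import Mathlib

noncomputable def singularValues {m n : ℕ} (A : Matrix (Fin m) (Fin n) ℝ) : Fin n → ℝ :=
  fun i => Real.sqrt ((Matrix.isHermitian_conjTranspose_mul_self A).eigenvalues i)

noncomputable def epsRank {m n : ℕ} (A : Matrix (Fin m) (Fin n) ℝ) (ε : ℝ) : ℕ :=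
  (Finset.univ.filter (fun i => ε < singularValues A i)).card

noncomputable def frobNorm {m n : ℕ} (A : Matrix (Fin m) (Fin n) ℝ) : ℝ :=
  Real.sqrt (∑ i, ∑ j, (A i j) ^ 2)

noncomputable def opNorm {m n : ℕ} (A : Matrix (Fin m) (Fin n) ℝ) : ℝ :=
  ⨆ i, singularValues A i

lemma trace_eq_sum_eig {n : ℕ} (A : Matrix (Fin n) (Fin n) ℝ) (hA : A.IsHermitian) :
    A.trace = ∑ i, hA.eigenvalues i := by
  conv_lhs => rw [hA.spectral_theorem]
  rw [Unitary.conjStarAlgAut_apply, Matrix.trace_mul_cycle,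
    (Matrix.mem_unitaryGroup_iff').mp hA.eigenvectorUnitary.2, one_mul,
    Matrix.trace_diagonal]
  rfl

lemma sv_nonneg {m n : ℕ} (A : Matrix (Fin m) (Fin n) ℝ) (i : Fin n) :
    0 ≤ singularValues A i := Real.sqrt_nonneg _

lemma sum_sv_sq {m n : ℕ} (A : Matrix (Fin m) (Fin n) ℝ) :
    ∑ i, (singularValues A i) ^ 2 = ∑ i, ∑ j, (A i j) ^ 2 := by
  have h := trace_eq_sum_eig _ (Matrix.isHermitian_conjTranspose_mul_self A)
  have heig := fun i => (Matrix.posSemidef_conjTranspose_mul_self A).eigenvalues_nonneg i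
  have : ∑ i, (singularValues A i) ^ 2 = ∑ i,
      (Matrix.isHermitian_conjTranspose_mul_self A).eigenvalues i := by
    refine Finset.sum_congr rfl fun i _ => ?_
    exact Real.sq_sqrt (heig i)
  rw [this, ← h, Matrix.trace]
  rw [Finset.sum_comm]
  refine Finset.sum_congr rfl fun j _ => ?_
  simp [Matrix.diag, Matrix.mul_apply, Matrix.conjTranspose_apply, sq]

lemma frobNorm_sq {m n : ℕ} (A : Matrix (Fin m) (Fin n) ℝ) :
    frobNorm A ^ 2 = ∑ i, (singularValues A i) ^ 2 := by
  rw [sum_sv_sq, frobNorm, Real.sq_sqrt]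
  positivity

lemma sv_le_opNorm {m n : ℕ} (A : Matrix (Fin m) (Fin n) ℝ) (i : Fin n) :
    singularValues A i ≤ opNorm A :=
  le_ciSup (Set.Finite.bddAbove (Set.finite_range _)) i

lemma frobNorm_pos {m n : ℕ} (A : Matrix (Fin m) (Fin n) ℝ) (hA : A ≠ 0) :
    0 < frobNorm A := by
  rcases Function.ne_iff.mp hA with ⟨i, hi⟩
  rcases Function.ne_iff.mp hi with ⟨j, hj⟩
  apply Real.sqrt_pos.mpr
  have h0 : (0:ℝ) < (A i j) ^ 2 :=
    lt_of_le_of_ne (sq_nonneg _) (Ne.symm (pow_ne_zero 2 hj))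
  calc (0:ℝ) < (A i j)^2 := h0
    _ ≤ ∑ j', (A i j')^2 := Finset.single_le_sum
        (f := fun j' => (A i j')^2) (fun _ _ => sq_nonneg _) (Finset.mem_univ j)
    _ ≤ ∑ i', ∑ j', (A i' j')^2 := Finset.single_le_sum
        (f := fun i' => ∑ j', (A i' j')^2) (fun _ _ => by positivity) (Finset.mem_univ i)

lemma opNorm_pos {m n : ℕ} (A : Matrix (Fin m) (Fin n) ℝ) (hA : A ≠ 0) :
    0 < opNorm A := by
  by_contra h
  push_neg at h
  have hz : ∀ i, singularValues A i = 0 := fun i =>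
    le_antisymm ((sv_le_opNorm A i).trans h) (sv_nonneg A i)
  have := frobNorm_sq A
  simp only [hz] at this
  simp at this
  have := frobNorm_pos A hA
  nlinarith [frobNorm_pos A hA]

theorem exists_bottleneck_layer_interp {L k : ℕ} (hk : 1 ≤ k) (hkL : k < L)
    (m n : Fin L → ℕ) (W : (i : Fin L) → Matrix (Fin (m i)) (Fin (n i)) ℝ)
    (hW : ∀ i, W i ≠ 0) (B : ℝ) (hB : 0 < B)
    (hHM : (L : ℝ) / (∑ i, (frobNorm (W i) / opNorm (W i))⁻¹) ≤
      Real.rpow B ((k : ℝ) / (L : ℝ))) :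
    ∃ l, ∃ ε₀ > 0, ∀ ε : ℝ, 0 < ε → ε < ε₀ →
      (epsRank (W l) ε : ℝ) ≤
        opNorm (W l) ^ 2 * Real.rpow B ((2 * k : ℝ) / (L : ℝ)) / ε ^ 2 := by
  set t : ℝ := Real.rpow B ((k : ℝ) / (L : ℝ)) with ht
  have htpos : 0 < t := Real.rpow_pos_of_pos hB _
  have hLpos : (0:ℕ) < L := lt_of_le_of_lt (Nat.zero_le k) hkL
  have hratio : ∀ i, 0 < frobNorm (W i) / opNorm (W i) := fun i =>
    div_pos (frobNorm_pos _ (hW i)) (opNorm_pos _ (hW i))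
  -- find l with ratio ≤ t
  have hexists : ∃ l, frobNorm (W l) / opNorm (W l) ≤ t := by
    by_contra h
    push_neg at h
    have hsum : ∑ i, (frobNorm (W i) / opNorm (W i))⁻¹ < (L:ℝ) * t⁻¹ := by
      calc ∑ i, (frobNorm (W i) / opNorm (W i))⁻¹
          < ∑ _i : Fin L, t⁻¹ := by
            apply Finset.sum_lt_sum_of_nonempty
            · exact Finset.univ_nonempty_iff.mpr ⟨⟨0, hLpos⟩⟩
            · intro i _
              exact inv_strictAnti₀ htpos (h i)
        _ = (L:ℝ) * t⁻¹ := by simp [mul_comm]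
    have hsumpos : 0 < ∑ i, (frobNorm (W i) / opNorm (W i))⁻¹ :=
      Finset.sum_pos (fun i _ => inv_pos.mpr (hratio i))
        (Finset.univ_nonempty_iff.mpr ⟨⟨0, hLpos⟩⟩)
    have : t < (L:ℝ) / (∑ i, (frobNorm (W i) / opNorm (W i))⁻¹) := by
      rw [lt_div_iff₀ hsumpos]
      calc t * ∑ i, (frobNorm (W i) / opNorm (W i))⁻¹ < t * ((L:ℝ) * t⁻¹) := by
            exact mul_lt_mul_of_pos_left hsum htpos
        _ = (L:ℝ) := by field_simp
    linarith
  obtain ⟨l, hl⟩ := hexists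
  refine ⟨l, 1, one_pos, fun ε hε _ => ?_⟩
  have hfrob : frobNorm (W l) ≤ opNorm (W l) * t := by
    rw [div_le_iff₀ (opNorm_pos _ (hW l))] at hl
    linarith
  -- ε² * epsRank ≤ frobNorm²
  have hkey : ε ^ 2 * (epsRank (W l) ε : ℝ) ≤ frobNorm (W l) ^ 2 := by
    rw [frobNorm_sq]
    calc ε ^ 2 * (epsRank (W l) ε : ℝ)
        = ∑ _i ∈ Finset.univ.filter (fun i => ε < singularValues (W l) i), ε ^ 2 := by
          rw [Finset.sum_const, epsRank]; ring
      _ ≤ ∑ i ∈ Finset.univ.filter (fun i => ε < singularValues (W l) i),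
            (singularValues (W l) i) ^ 2 := by
          apply Finset.sum_le_sum
          intro i hi
          have := (Finset.mem_filter.mp hi).2
          nlinarith
      _ ≤ ∑ i, (singularValues (W l) i) ^ 2 := by
          apply Finset.sum_le_sum_of_subset_of_nonneg (Finset.filter_subset _ _)
          intro i _ _; positivity
  have ht2 : Real.rpow B ((2 * k : ℝ) / (L : ℝ)) = t ^ 2 := by
    show (B:ℝ) ^ ((2 * (k:ℝ)) / (L:ℝ)) = t ^ 2
    have htt : t = (B:ℝ) ^ ((k:ℝ)/(L:ℝ)) := rfl
    rw [htt, show (2 * (k:ℝ)) / L = (k:ℝ)/L * ((2:ℕ):ℝ) by push_cast; ring,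
      Real.rpow_mul hB.le, Real.rpow_natCast]
  rw [ht2, le_div_iff₀ (by positivity : (0:ℝ) < ε ^ 2)]
  calc (epsRank (W l) ε : ℝ) * ε ^ 2 = ε ^ 2 * (epsRank (W l) ε : ℝ) := by ring
    _ ≤ frobNorm (W l) ^ 2 := hkey
    _ ≤ (opNorm (W l) * t) ^ 2 := by
        have h1 : 0 ≤ frobNorm (W l) := (frobNorm_pos _ (hW l)).le
        nlinarith
    _ = opNorm (W l) ^ 2 * t ^ 2 := by ring
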